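/- arXiv:2103.07657 — 6 statements merged into one kernel-verified Lean document; each statement's English description precedes it below -/
import Mathlib

section
/- Let (A, μ, ι) be an algebra in a monoidal category C, with a morphism ε : A → 𝟙 satisfying ε ∘ ι = id_𝟙 and a morphism i : 𝟙 → A ⊗ A such that A is rigid and self-dual with evaluation ε ∘ μ and coevaluation i (the two zig-zag composites equal id_A). Let (X1, μ_{X1}) and (X2, μ_{X2}) be left A-modules and let σ : X2 → X1 be any morphism in C. Define S : X2 → X1 as the composite S = μ_{X1} ∘ (id_A ⊗ σ) ∘ (id_A ⊗ μ_{X2}) ∘ α⁻¹_{A,A,X2} ∘ (i ⊗ id_{X2}) ∘ λ⁻¹_{X2}. Then S is a morphism of left A-modules, i.e. μ_{X1} ∘ (id_A ⊗ S) = S ∘ μ_{X2}. -/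
open CategoryTheory MonoidalCategory

/-- Given an algebra `(A, μ, ι)` rigid and self-dual with evaluation `ε ∘ μ`
and coevaluation `i`, left `A`-modules `(X1, a1)`, `(X2, a2)` and any morphism `σ : X2 ⟶ X1`
in `C`, the averaged morphism
`S = μ_{X1} ∘ (id_A ⊗ σ) ∘ (id_A ⊗ μ_{X2}) ∘ α⁻¹ ∘ (i ⊗ id_{X2}) ∘ λ⁻¹` is a morphism of left
`A`-modules. -/
theorem statement1 {C : Type*} [Category C] [MonoidalCategory C]
    (A : C) (μ : A ⊗ A ⟶ A) (ι : 𝟙_ C ⟶ A)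
    (unit_left : (ι ⊗ₘ 𝟙 A) ≫ μ = (λ_ A).hom)
    (unit_right : (𝟙 A ⊗ₘ ι) ≫ μ = (ρ_ A).hom)
    (assoc : (𝟙 A ⊗ₘ μ) ≫ μ = (α_ A A A).inv ≫ (μ ⊗ₘ 𝟙 A) ≫ μ)
    (ε : A ⟶ 𝟙_ C) (hει : ι ≫ ε = 𝟙 (𝟙_ C))
    (i : 𝟙_ C ⟶ A ⊗ A)
    (zig1 : (λ_ A).inv ≫ (i ⊗ₘ 𝟙 A) ≫ (α_ A A A).hom ≫ (𝟙 A ⊗ₘ (μ ≫ ε)) ≫ (ρ_ A).hom = 𝟙 A)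
    (zig2 : (ρ_ A).inv ≫ (𝟙 A ⊗ₘ i) ≫ (α_ A A A).inv ≫ ((μ ≫ ε) ⊗ₘ 𝟙 A) ≫ (λ_ A).hom = 𝟙 A)
    (X1 X2 : C) (a1 : A ⊗ X1 ⟶ X1) (a2 : A ⊗ X2 ⟶ X2)
    (unit1 : (ι ⊗ₘ 𝟙 X1) ≫ a1 = (λ_ X1).hom)
    (assoc1 : (𝟙 A ⊗ₘ a1) ≫ a1 = (α_ A A X1).inv ≫ (μ ⊗ₘ 𝟙 X1) ≫ a1)
    (unit2 : (ι ⊗ₘ 𝟙 X2) ≫ a2 = (λ_ X2).hom)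
    (assoc2 : (𝟙 A ⊗ₘ a2) ≫ a2 = (α_ A A X2).inv ≫ (μ ⊗ₘ 𝟙 X2) ≫ a2)
    (σ : X2 ⟶ X1)
    (S : X2 ⟶ X1)
    (hS : S = (λ_ X2).inv ≫ (i ⊗ₘ 𝟙 X2) ≫ (α_ A A X2).hom ≫ (𝟙 A ⊗ₘ a2) ≫ (𝟙 A ⊗ₘ σ) ≫ a1) :
    (𝟙 A ⊗ₘ S) ≫ a1 = a2 ≫ S := by
  subst hS
  simp only [id_tensorHom, tensorHom_id] at zig1 zig2 assoc assoc1 assoc2 ⊢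
  -- pairing associativity
  have hpair : μ ▷ A ≫ (μ ≫ ε) = (α_ A A A).hom ≫ A ◁ μ ≫ (μ ≫ ε) := by
    have h := reassoc_of% assoc
    simp only [← Category.assoc]
    simp only [Category.assoc]
    rw [h]
    simp
  have cv_ev : A ◁ i ≫ (α_ A A A).inv ≫ (μ ≫ ε) ▷ A = (ρ_ A).hom ≫ (λ_ A).inv := by
    rw [← cancel_epi (ρ_ A).inv, ← cancel_mono (λ_ A).hom]
    simpa using zig2
  have ev_cv : i ▷ A ≫ (α_ A A A).hom ≫ A ◁ (μ ≫ ε) = (λ_ A).hom ≫ (ρ_ A).inv := by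
    rw [← cancel_epi (λ_ A).inv, ← cancel_mono (ρ_ A).hom]
    simpa using zig1
  letI : ExactPairing A A := ⟨i, μ ≫ ε, cv_ev, ev_cv⟩
  have hη : (η_ A A) = i := rfl
  have hε : (ε_ A A) = μ ≫ ε := rfl
  -- the key "Casimir element" identity
  have h1 : (tensorRightHomEquiv A A A A).symm
      ((λ_ A).inv ≫ i ▷ A ≫ (α_ A A A).hom ≫ A ◁ μ) = μ := by
    dsimp [tensorRightHomEquiv]
    rw [hε]
    calc ((λ_ A).inv ≫ i ▷ A ≫ (α_ A A A).hom ≫ A ◁ μ) ▷ A ≫ (α_ A A A).hom ≫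
          A ◁ (μ ≫ ε) ≫ (ρ_ A).hom
        = 𝟙 _ ⊗≫ i ▷ (A ⊗ A) ⊗≫ A ◁ (μ ▷ A ≫ (μ ≫ ε)) ⊗≫ 𝟙 _ := by
          monoidal
      _ = 𝟙 _ ⊗≫ (i ▷ (A ⊗ A) ≫ (A ⊗ A) ◁ μ) ⊗≫ A ◁ (μ ≫ ε) ⊗≫ 𝟙 _ := by
          rw [hpair]; monoidal
      _ = 𝟙 _ ⊗≫ (𝟙_ C ◁ μ ≫ i ▷ A) ⊗≫ A ◁ (μ ≫ ε) ⊗≫ 𝟙 _ := by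
          rw [← whisker_exchange]
      _ = μ ≫ ((λ_ A).inv ≫ i ▷ A ≫ (α_ A A A).hom ≫ A ◁ (μ ≫ ε) ≫ (ρ_ A).hom) := by
          monoidal
      _ = μ := by rw [zig1]; simp
  have key : (ρ_ A).inv ≫ A ◁ i ≫ (α_ A A A).inv ≫ μ ▷ A
      = (λ_ A).inv ≫ i ▷ A ≫ (α_ A A A).hom ≫ A ◁ μ := by
    have h2 := congrArg (tensorRightHomEquiv A A A A) h1
    rw [Equiv.apply_symm_apply] at h2
    rw [h2]
    dsimp [tensorRightHomEquiv]
    rw [hη]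
  -- assoc2 in the convenient direction
  have assoc2' : μ ▷ X2 ≫ a2 = (α_ A A X2).hom ≫ A ◁ a2 ≫ a2 := by
    rw [assoc2]; simp
  calc A ◁ ((λ_ X2).inv ≫ i ▷ X2 ≫ (α_ A A X2).hom ≫ A ◁ a2 ≫ A ◁ σ ≫ a1) ≫ a1
      = A ◁ (λ_ X2).inv ≫ A ◁ (i ▷ X2) ≫ A ◁ (α_ A A X2).hom ≫ A ◁ (A ◁ a2) ≫
          A ◁ (A ◁ σ) ≫ (A ◁ a1 ≫ a1) := by
        simp only [MonoidalCategory.whiskerLeft_comp, Category.assoc]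
    _ = A ◁ (λ_ X2).inv ≫ A ◁ (i ▷ X2) ≫ A ◁ (α_ A A X2).hom ≫ A ◁ (A ◁ a2) ≫
          A ◁ (A ◁ σ) ≫ ((α_ A A X1).inv ≫ μ ▷ X1 ≫ a1) := by
        rw [assoc1]
    _ = 𝟙 _ ⊗≫ A ◁ (i ▷ X2) ⊗≫ ((A ⊗ A) ◁ (a2 ≫ σ) ≫ μ ▷ X1) ⊗≫ a1 := by
        monoidal
    _ = 𝟙 _ ⊗≫ A ◁ (i ▷ X2) ⊗≫ (μ ▷ (A ⊗ X2) ≫ A ◁ (a2 ≫ σ)) ⊗≫ a1 := by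
        rw [whisker_exchange]
    _ = (((ρ_ A).inv ≫ A ◁ i ≫ (α_ A A A).inv ≫ μ ▷ A) ▷ X2) ≫ (α_ A A X2).hom ≫
          A ◁ a2 ≫ A ◁ σ ≫ a1 := by
        monoidal
    _ = (((λ_ A).inv ≫ i ▷ A ≫ (α_ A A A).hom ≫ A ◁ μ) ▷ X2) ≫ (α_ A A X2).hom ≫
          A ◁ a2 ≫ A ◁ σ ≫ a1 := by
        rw [key]
    _ = 𝟙 _ ⊗≫ i ▷ (A ⊗ X2) ⊗≫ A ◁ (μ ▷ X2 ≫ a2) ⊗≫ (A ◁ σ ≫ a1) := by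
        monoidal
    _ = 𝟙 _ ⊗≫ (i ▷ (A ⊗ X2) ≫ (A ⊗ A) ◁ a2) ⊗≫ (A ◁ a2 ≫ A ◁ σ ≫ a1) := by
        rw [assoc2']; monoidal
    _ = 𝟙 _ ⊗≫ (𝟙_ C ◁ a2 ≫ i ▷ X2) ⊗≫ (A ◁ a2 ≫ A ◁ σ ≫ a1) := by
        rw [← whisker_exchange]
    _ = a2 ≫ ((λ_ X2).inv ≫ i ▷ X2 ≫ (α_ A A X2).hom ≫ A ◁ a2 ≫ A ◁ σ ≫ a1) := by
        monoidal
end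

section
/- Let C be an F-linear monoidal category over a field F and (A, μ, ι) an algebra in C. Suppose i : 𝟙 → A ⊗ A is a morphism satisfying μ ∘ i = c · ι for a scalar c ∈ F. Let (X1, μ_{X1}) and (X2, μ_{X2}) be left A-modules, let f : X1 → X2 be a morphism of left A-modules, and let σ : X2 → X1 be a morphism in C with f ∘ σ = id_{X2}. Define S : X2 → X1 as the composite S = μ_{X1} ∘ (id_A ⊗ σ) ∘ (id_A ⊗ μ_{X2}) ∘ α⁻¹_{A,A,X2} ∘ (i ⊗ id_{X2}) ∘ λ⁻¹_{X2}. Then f ∘ S = c · id_{X2}. -/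
open CategoryTheory MonoidalCategory

/-- In an `F`-linear monoidal category, for an algebra `(A, μ, ι)` with
`μ ∘ i = c • ι`, left `A`-modules `X1, X2`, a module morphism `f : X1 ⟶ X2` and a morphism
`σ : X2 ⟶ X1` in `C` with `f ∘ σ = id`, the averaged morphism `S` satisfies
`f ∘ S = c • id_{X2}`. -/
theorem statement2 {F : Type*} [Field F] {C : Type*} [Category C] [Preadditive C]
    [CategoryTheory.Linear F C] [MonoidalCategory C] [MonoidalPreadditive C]
    [MonoidalLinear F C]
    (A : C) (μ : A ⊗ A ⟶ A) (ι : 𝟙_ C ⟶ A)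
    (unit_left : (ι ⊗ₘ 𝟙 A) ≫ μ = (λ_ A).hom)
    (unit_right : (𝟙 A ⊗ₘ ι) ≫ μ = (ρ_ A).hom)
    (assoc : (𝟙 A ⊗ₘ μ) ≫ μ = (α_ A A A).inv ≫ (μ ⊗ₘ 𝟙 A) ≫ μ)
    (i : 𝟙_ C ⟶ A ⊗ A) (c : F) (hindex : i ≫ μ = c • ι)
    (X1 X2 : C) (a1 : A ⊗ X1 ⟶ X1) (a2 : A ⊗ X2 ⟶ X2)
    (unit1 : (ι ⊗ₘ 𝟙 X1) ≫ a1 = (λ_ X1).hom)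
    (assoc1 : (𝟙 A ⊗ₘ a1) ≫ a1 = (α_ A A X1).inv ≫ (μ ⊗ₘ 𝟙 X1) ≫ a1)
    (unit2 : (ι ⊗ₘ 𝟙 X2) ≫ a2 = (λ_ X2).hom)
    (assoc2 : (𝟙 A ⊗ₘ a2) ≫ a2 = (α_ A A X2).inv ≫ (μ ⊗ₘ 𝟙 X2) ≫ a2)
    (f : X1 ⟶ X2) (hf : a1 ≫ f = (𝟙 A ⊗ₘ f) ≫ a2)
    (σ : X2 ⟶ X1) (hσ : σ ≫ f = 𝟙 X2)
    (S : X2 ⟶ X1)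
    (hS : S = (λ_ X2).inv ≫ (i ⊗ₘ 𝟙 X2) ≫ (α_ A A X2).hom ≫ (𝟙 A ⊗ₘ a2) ≫ (𝟙 A ⊗ₘ σ) ≫ a1) :
    S ≫ f = c • 𝟙 X2 := by
  subst hS
  simp only [Category.assoc]
  slice_lhs 6 7 => rw [hf]
  slice_lhs 5 6 => rw [tensorHom_comp_tensorHom, hσ, Category.comp_id]
  simp only [id_tensorHom_id, Category.id_comp]
  slice_lhs 4 5 => rw [assoc2]
  slice_lhs 3 4 => rw [Iso.hom_inv_id]
  simp only [Category.id_comp]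
  slice_lhs 2 3 => rw [tensorHom_comp_tensorHom, hindex, Category.comp_id]
  have h : (c • ι) ⊗ₘ 𝟙 X2 = c • (ι ⊗ₘ 𝟙 X2) := by
    simp [MonoidalCategory.tensorHom_def]
  rw [h]
  rw [tensorHom_id] at unit2
  simp [unit2]
end

section
/- Let F be a field and C an F-linear abelian monoidal category whose composition and tensor product of morphisms are F-bilinear. Let (A, μ, ι) be an algebra in C satisfying Assumption (*) with index c ≠ 0. If every epimorphism in C splits, then every epimorphism in the category Mod_A of left A-modules splits; that is, Mod_A is semisimple. -/
open CategoryTheory MonoidalCategory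

/-- Let `C` be an `F`-linear abelian monoidal category and `(A, μ, ι)` an algebra
in `C` satisfying Assumption (*) with index `c ≠ 0`. If every epimorphism in `C` splits, then
every epimorphism in the category `Mod_A` of left `A`-modules splits (i.e. `Mod_A` is
semisimple). An epimorphism in `Mod_A` is a module morphism `f : X1 ⟶ X2` such that any two
module morphisms out of `X2` agreeing after composition with `f` are equal, and a splitting is
a module morphism section. -/
theorem statement3 {F : Type*} [Field F] {C : Type*} [Category C] [Abelian C]
    [CategoryTheory.Linear F C] [MonoidalCategory C] [MonoidalPreadditive C]
    [MonoidalLinear F C]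
    (A : C) (μ : A ⊗ A ⟶ A) (ι : 𝟙_ C ⟶ A)
    (unit_left : (ι ⊗ₘ 𝟙 A) ≫ μ = (λ_ A).hom)
    (unit_right : (𝟙 A ⊗ₘ ι) ≫ μ = (ρ_ A).hom)
    (assoc : (𝟙 A ⊗ₘ μ) ≫ μ = (α_ A A A).inv ≫ (μ ⊗ₘ 𝟙 A) ≫ μ)
    -- Assumption (*) part (1)
    (ε : A ⟶ 𝟙_ C) (hει : ι ≫ ε = 𝟙 (𝟙_ C))
    -- Assumption (*) part (2)
    (i : 𝟙_ C ⟶ A ⊗ A)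
    (zig1 : (λ_ A).inv ≫ (i ⊗ₘ 𝟙 A) ≫ (α_ A A A).hom ≫ (𝟙 A ⊗ₘ (μ ≫ ε)) ≫ (ρ_ A).hom = 𝟙 A)
    (zig2 : (ρ_ A).inv ≫ (𝟙 A ⊗ₘ i) ≫ (α_ A A A).inv ≫ ((μ ≫ ε) ⊗ₘ 𝟙 A) ≫ (λ_ A).hom = 𝟙 A)
    -- Assumption (*) part (3): non-zero index
    (c : F) (hc : c ≠ 0) (hindex : i ≫ μ = c • ι)
    -- C is semisimple: every epimorphism in C splits
    (hC : ∀ {W1 W2 : C} (f : W1 ⟶ W2), Epi f → ∃ σ : W2 ⟶ W1, σ ≫ f = 𝟙 W2)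
    -- an epimorphism in Mod_A:
    (X1 X2 : C) (a1 : A ⊗ X1 ⟶ X1) (a2 : A ⊗ X2 ⟶ X2)
    (unit1 : (ι ⊗ₘ 𝟙 X1) ≫ a1 = (λ_ X1).hom)
    (assoc1 : (𝟙 A ⊗ₘ a1) ≫ a1 = (α_ A A X1).inv ≫ (μ ⊗ₘ 𝟙 X1) ≫ a1)
    (unit2 : (ι ⊗ₘ 𝟙 X2) ≫ a2 = (λ_ X2).hom)
    (assoc2 : (𝟙 A ⊗ₘ a2) ≫ a2 = (α_ A A X2).inv ≫ (μ ⊗ₘ 𝟙 X2) ≫ a2)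
    (f : X1 ⟶ X2) (hf : a1 ≫ f = (𝟙 A ⊗ₘ f) ≫ a2)
    (hepi : ∀ (X3 : C) (a3 : A ⊗ X3 ⟶ X3),
      (ι ⊗ₘ 𝟙 X3) ≫ a3 = (λ_ X3).hom →
      (𝟙 A ⊗ₘ a3) ≫ a3 = (α_ A A X3).inv ≫ (μ ⊗ₘ 𝟙 X3) ≫ a3 →
      ∀ (g h : X2 ⟶ X3), a2 ≫ g = (𝟙 A ⊗ₘ g) ≫ a3 → a2 ≫ h = (𝟙 A ⊗ₘ h) ≫ a3 →
        f ≫ g = f ≫ h → g = h) :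
    ∃ s : X2 ⟶ X1, a2 ≫ s = (𝟙 A ⊗ₘ s) ≫ a1 ∧ s ≫ f = 𝟙 X2 := by
  simp only [id_tensorHom, tensorHom_id] at unit_left unit_right assoc zig1 zig2 unit1 assoc1 unit2 assoc2 hf hepi ⊢
  -- associativity for the evaluation
  have hev : (μ ▷ A) ≫ μ ≫ ε = (α_ A A A).hom ≫ (A ◁ μ) ≫ μ ≫ ε := by
    rw [reassoc_of% assoc]; simp
  -- the Casimir / Frobenius property of the coevaluation
  have hcas : (λ_ A).inv ≫ i ▷ A ≫ (α_ A A A).hom ≫ A ◁ μ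
      = (ρ_ A).inv ≫ A ◁ i ≫ (α_ A A A).inv ≫ μ ▷ A := by
    calc (λ_ A).inv ≫ i ▷ A ≫ (α_ A A A).hom ≫ A ◁ μ
        = 𝟙 _ ⊗≫ i ▷ A ⊗≫ A ◁ (μ ≫ (ρ_ A).inv ≫ A ◁ i ≫ (α_ A A A).inv ≫ (μ ≫ ε) ▷ A ≫
            (λ_ A).hom) := by rw [zig2]; monoidal
      _ = 𝟙 _ ⊗≫ i ▷ A ⊗≫ A ◁ (μ ▷ 𝟙_ C ≫ A ◁ i) ⊗≫ A ◁ ((μ ≫ ε) ▷ A) ⊗≫ 𝟙 _ := by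
            monoidal
      _ = 𝟙 _ ⊗≫ i ▷ A ⊗≫ A ◁ ((A ⊗ A) ◁ i ≫ μ ▷ (A ⊗ A)) ⊗≫ A ◁ ((μ ≫ ε) ▷ A) ⊗≫ 𝟙 _ := by
            rw [← whisker_exchange]
      _ = 𝟙 _ ⊗≫ i ▷ A ⊗≫ A ◁ ((A ⊗ A) ◁ i) ⊗≫ A ◁ ((μ ▷ A ≫ μ ≫ ε) ▷ A) ⊗≫ 𝟙 _ := by
            monoidal
      _ = 𝟙 _ ⊗≫ i ▷ A ⊗≫ A ◁ ((A ⊗ A) ◁ i) ⊗≫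
            A ◁ (((α_ A A A).hom ≫ A ◁ μ ≫ μ ≫ ε) ▷ A) ⊗≫ 𝟙 _ := by rw [hev]
      _ = 𝟙 _ ⊗≫ (i ▷ A ≫ (A ⊗ A) ◁ ((ρ_ A).inv ≫ A ◁ i ≫ (α_ A A A).inv ≫ μ ▷ A)) ⊗≫
            A ◁ ((μ ≫ ε) ▷ A) ⊗≫ 𝟙 _ := by monoidal
      _ = 𝟙 _ ⊗≫ (𝟙_ C ◁ ((ρ_ A).inv ≫ A ◁ i ≫ (α_ A A A).inv ≫ μ ▷ A) ≫ i ▷ (A ⊗ A)) ⊗≫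
            A ◁ ((μ ≫ ε) ▷ A) ⊗≫ 𝟙 _ := by rw [whisker_exchange]
      _ = 𝟙 _ ⊗≫ ((ρ_ A).inv ≫ A ◁ i ≫ (α_ A A A).inv ≫ μ ▷ A) ⊗≫
            (((λ_ A).inv ≫ i ▷ A ≫ (α_ A A A).hom ≫ A ◁ (μ ≫ ε) ≫ (ρ_ A).hom) ▷ A) ⊗≫ 𝟙 _ := by
            monoidal
      _ = (ρ_ A).inv ≫ A ◁ i ≫ (α_ A A A).inv ≫ μ ▷ A := by rw [zig1]; monoidal
  -- contraction: (ε ⊗ 1) ∘ i = ι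
  have hcontract : i ≫ ε ▷ A ≫ (λ_ A).hom = ι := by
    symm
    calc ι = ι ≫ 𝟙 A := by simp
      _ = ι ≫ (ρ_ A).inv ≫ A ◁ i ≫ (α_ A A A).inv ≫ (μ ≫ ε) ▷ A ≫ (λ_ A).hom := by rw [zig2]
      _ = 𝟙 _ ⊗≫ (ι ▷ 𝟙_ C ≫ A ◁ i) ⊗≫ (μ ≫ ε) ▷ A ⊗≫ 𝟙 _ := by monoidal
      _ = 𝟙 _ ⊗≫ (𝟙_ C ◁ i ≫ ι ▷ (A ⊗ A)) ⊗≫ (μ ≫ ε) ▷ A ⊗≫ 𝟙 _ := by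
            rw [← whisker_exchange]
      _ = 𝟙 _ ⊗≫ i ⊗≫ ((ι ▷ A ≫ μ ≫ ε) ▷ A) ⊗≫ 𝟙 _ := by monoidal
      _ = 𝟙 _ ⊗≫ i ⊗≫ (((λ_ A).hom ≫ ε) ▷ A) ⊗≫ 𝟙 _ := by rw [reassoc_of% unit_left]
      _ = i ≫ ε ▷ A ≫ (λ_ A).hom := by monoidal
  -- the coaction map Φ φ is a module map into the free module A ⊗ W
  have hmod : ∀ (W : C) (φ : X2 ⟶ W),
      a2 ≫ ((λ_ X2).inv ≫ i ▷ X2 ≫ (α_ A A X2).hom ≫ A ◁ (a2 ≫ φ))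
      = A ◁ ((λ_ X2).inv ≫ i ▷ X2 ≫ (α_ A A X2).hom ≫ A ◁ (a2 ≫ φ))
        ≫ (α_ A A W).inv ≫ μ ▷ W := by
    intro W φ
    calc a2 ≫ ((λ_ X2).inv ≫ i ▷ X2 ≫ (α_ A A X2).hom ≫ A ◁ (a2 ≫ φ))
        = 𝟙 _ ⊗≫ (𝟙_ C ◁ a2 ≫ i ▷ X2) ⊗≫ A ◁ (a2 ≫ φ) ⊗≫ 𝟙 _ := by monoidal
      _ = 𝟙 _ ⊗≫ (i ▷ (A ⊗ X2) ≫ (A ⊗ A) ◁ a2) ⊗≫ A ◁ (a2 ≫ φ) ⊗≫ 𝟙 _ := by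
            rw [whisker_exchange]
      _ = 𝟙 _ ⊗≫ i ▷ (A ⊗ X2) ⊗≫ A ◁ (A ◁ a2 ≫ a2) ⊗≫ A ◁ φ ⊗≫ 𝟙 _ := by monoidal
      _ = 𝟙 _ ⊗≫ i ▷ (A ⊗ X2) ⊗≫ A ◁ ((α_ A A X2).inv ≫ μ ▷ X2 ≫ a2) ⊗≫ A ◁ φ ⊗≫ 𝟙 _ := by
            rw [assoc2]
      _ = 𝟙 _ ⊗≫ (((λ_ A).inv ≫ i ▷ A ≫ (α_ A A A).hom ≫ A ◁ μ) ▷ X2) ⊗≫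
            A ◁ (a2 ≫ φ) ⊗≫ 𝟙 _ := by monoidal
      _ = 𝟙 _ ⊗≫ (((ρ_ A).inv ≫ A ◁ i ≫ (α_ A A A).inv ≫ μ ▷ A) ▷ X2) ⊗≫
            A ◁ (a2 ≫ φ) ⊗≫ 𝟙 _ := by rw [hcas]
      _ = 𝟙 _ ⊗≫ ((A ◁ i) ▷ X2) ⊗≫ (μ ▷ (A ⊗ X2) ≫ A ◁ (a2 ≫ φ)) ⊗≫ 𝟙 _ := by monoidal
      _ = 𝟙 _ ⊗≫ ((A ◁ i) ▷ X2) ⊗≫ ((A ⊗ A) ◁ (a2 ≫ φ) ≫ μ ▷ W) ⊗≫ 𝟙 _ := by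
            rw [← whisker_exchange]
      _ = A ◁ ((λ_ X2).inv ≫ i ▷ X2 ≫ (α_ A A X2).hom ≫ A ◁ (a2 ≫ φ)) ≫
            (α_ A A W).inv ≫ μ ▷ W := by monoidal
  -- naturality: Φ(φ) ∘ f = Φ'(φ ∘ f)
  have hnat : ∀ (W : C) (φ : X2 ⟶ W),
      f ≫ ((λ_ X2).inv ≫ i ▷ X2 ≫ (α_ A A X2).hom ≫ A ◁ (a2 ≫ φ))
      = (λ_ X1).inv ≫ i ▷ X1 ≫ (α_ A A X1).hom ≫ A ◁ (a1 ≫ f ≫ φ) := by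
    intro W φ
    calc f ≫ ((λ_ X2).inv ≫ i ▷ X2 ≫ (α_ A A X2).hom ≫ A ◁ (a2 ≫ φ))
        = 𝟙 _ ⊗≫ (𝟙_ C ◁ f ≫ i ▷ X2) ⊗≫ A ◁ (a2 ≫ φ) ⊗≫ 𝟙 _ := by monoidal
      _ = 𝟙 _ ⊗≫ (i ▷ X1 ≫ (A ⊗ A) ◁ f) ⊗≫ A ◁ (a2 ≫ φ) ⊗≫ 𝟙 _ := by rw [whisker_exchange]
      _ = 𝟙 _ ⊗≫ i ▷ X1 ⊗≫ A ◁ (A ◁ f ≫ a2 ≫ φ) ⊗≫ 𝟙 _ := by monoidal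
      _ = 𝟙 _ ⊗≫ i ▷ X1 ⊗≫ A ◁ (a1 ≫ f ≫ φ) ⊗≫ 𝟙 _ := by rw [← reassoc_of% hf]
      _ = (λ_ X1).inv ≫ i ▷ X1 ≫ (α_ A A X1).hom ≫ A ◁ (a1 ≫ f ≫ φ) := by monoidal
  -- retraction: Φ(φ) followed by ε-contraction gives back φ
  have hret : ∀ (W : C) (φ : X2 ⟶ W),
      ((λ_ X2).inv ≫ i ▷ X2 ≫ (α_ A A X2).hom ≫ A ◁ (a2 ≫ φ)) ≫ ε ▷ W ≫ (λ_ W).hom = φ := by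
    intro W φ
    calc ((λ_ X2).inv ≫ i ▷ X2 ≫ (α_ A A X2).hom ≫ A ◁ (a2 ≫ φ)) ≫ ε ▷ W ≫ (λ_ W).hom
        = 𝟙 _ ⊗≫ i ▷ X2 ⊗≫ (A ◁ (a2 ≫ φ) ≫ ε ▷ W) ⊗≫ 𝟙 _ := by monoidal
      _ = 𝟙 _ ⊗≫ i ▷ X2 ⊗≫ (ε ▷ (A ⊗ X2) ≫ 𝟙_ C ◁ (a2 ≫ φ)) ⊗≫ 𝟙 _ := by
            rw [whisker_exchange]
      _ = 𝟙 _ ⊗≫ ((i ≫ ε ▷ A ≫ (λ_ A).hom) ▷ X2) ⊗≫ a2 ≫ φ := by monoidal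
      _ = (λ_ X2).inv ≫ (ι ▷ X2 ≫ a2) ≫ φ := by rw [hcontract]; monoidal
      _ = φ := by rw [unit2]; simp
  -- f is an epimorphism in C
  have hEpi : Epi f := by
    constructor
    intro Z g h w
    have hu : ι ▷ (A ⊗ Z) ≫ (α_ A A Z).inv ≫ μ ▷ Z = (λ_ (A ⊗ Z)).hom := by
      calc ι ▷ (A ⊗ Z) ≫ (α_ A A Z).inv ≫ μ ▷ Z = 𝟙 _ ⊗≫ (ι ▷ A ≫ μ) ▷ Z ⊗≫ 𝟙 _ := by
            monoidal
        _ = _ := by rw [unit_left]; monoidal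
    have ha : A ◁ ((α_ A A Z).inv ≫ μ ▷ Z) ≫ (α_ A A Z).inv ≫ μ ▷ Z
        = (α_ A A (A ⊗ Z)).inv ≫ μ ▷ (A ⊗ Z) ≫ (α_ A A Z).inv ≫ μ ▷ Z := by
      calc A ◁ ((α_ A A Z).inv ≫ μ ▷ Z) ≫ (α_ A A Z).inv ≫ μ ▷ Z
          = 𝟙 _ ⊗≫ ((A ◁ μ ≫ μ) ▷ Z) ⊗≫ 𝟙 _ := by monoidal
        _ = 𝟙 _ ⊗≫ (((α_ A A A).inv ≫ μ ▷ A ≫ μ) ▷ Z) ⊗≫ 𝟙 _ := by rw [assoc]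
        _ = _ := by monoidal
    have key := hepi (A ⊗ Z) ((α_ A A Z).inv ≫ μ ▷ Z) hu ha
      ((λ_ X2).inv ≫ i ▷ X2 ≫ (α_ A A X2).hom ≫ A ◁ (a2 ≫ g))
      ((λ_ X2).inv ≫ i ▷ X2 ≫ (α_ A A X2).hom ≫ A ◁ (a2 ≫ h))
      (hmod Z g) (hmod Z h)
      (by rw [hnat Z g, hnat Z h, w])
    calc g = ((λ_ X2).inv ≫ i ▷ X2 ≫ (α_ A A X2).hom ≫ A ◁ (a2 ≫ g)) ≫ ε ▷ Z ≫ (λ_ Z).hom :=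
          (hret Z g).symm
      _ = ((λ_ X2).inv ≫ i ▷ X2 ≫ (α_ A A X2).hom ≫ A ◁ (a2 ≫ h)) ≫ ε ▷ Z ≫ (λ_ Z).hom := by
          rw [key]
      _ = h := hret Z h
  obtain ⟨σ, hσ⟩ := hC f hEpi
  set t : X2 ⟶ X1 :=
    ((λ_ X2).inv ≫ i ▷ X2 ≫ (α_ A A X2).hom ≫ A ◁ (a2 ≫ σ)) ≫ a1 with ht
  have htmod : a2 ≫ t = A ◁ t ≫ a1 := by
    rw [ht, ← Category.assoc, hmod X1 σ]
    simp only [Category.assoc, MonoidalCategory.whiskerLeft_comp]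
    rw [← assoc1]
  have htf : t ≫ f = c • 𝟙 X2 := by
    rw [ht, Category.assoc]
    calc ((λ_ X2).inv ≫ i ▷ X2 ≫ (α_ A A X2).hom ≫ A ◁ (a2 ≫ σ)) ≫ a1 ≫ f
        = (λ_ X2).inv ≫ i ▷ X2 ≫ (α_ A A X2).hom ≫ A ◁ a2 ≫ a2 := by
          simp only [Category.assoc, hf, ← MonoidalCategory.whiskerLeft_comp_assoc,
            ← MonoidalCategory.whiskerLeft_comp]
          rw [hσ]; simp
      _ = (λ_ X2).inv ≫ i ▷ X2 ≫ (α_ A A X2).hom ≫ (α_ A A X2).inv ≫ μ ▷ X2 ≫ a2 := by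
          rw [assoc2]
      _ = (λ_ X2).inv ≫ (i ≫ μ) ▷ X2 ≫ a2 := by
          simp only [Iso.hom_inv_id_assoc, comp_whiskerRight, Category.assoc]
      _ = c • ((λ_ X2).inv ≫ ι ▷ X2 ≫ a2) := by
          rw [hindex]; simp [MonoidalLinear.smul_whiskerRight, Linear.comp_smul,
            Linear.smul_comp]
      _ = c • 𝟙 X2 := by rw [unit2]; simp
  refine ⟨c⁻¹ • t, ?_, ?_⟩
  · rw [Linear.comp_smul, MonoidalLinear.whiskerLeft_smul, Linear.smul_comp, ← htmod]
  · rw [Linear.smul_comp, htf, smul_smul, inv_mul_cancel₀ hc, one_smul]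
end

section
/- Let C be a monoidal category whose unit object 𝟙 is projective with respect to epimorphisms. Let W2 be an object of C admitting a right dual W2* (with evaluation e : W2* ⊗ W2 → 𝟙 and coevaluation i : 𝟙 → W2 ⊗ W2* satisfying the zig-zag identities), and suppose the functor − ⊗ W2* preserves epimorphisms (as holds, in particular, when W2* itself has a right dual). Then every epimorphism f : W1 → W2 in C splits: there exists σ : W2 → W1 with f ∘ σ = id_{W2}. -/
open CategoryTheory MonoidalCategory

/-- Let `C` be a monoidal category whose unit object is projective with respect to
epimorphisms. If `W2` has a right dual `Wd` (evaluation `e`, coevaluation `i`, zig-zag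
identities) and `− ⊗ Wd` preserves epimorphisms, then every epimorphism `f : W1 ⟶ W2` splits. -/
theorem statement8 {C : Type*} [Category C] [MonoidalCategory C]
    (hproj : ∀ {W1 W2 : C} (f : W1 ⟶ W2), Epi f → ∀ (g : 𝟙_ C ⟶ W2),
      ∃ h : 𝟙_ C ⟶ W1, h ≫ f = g)
    (W2 Wd : C) (e : Wd ⊗ W2 ⟶ 𝟙_ C) (i : 𝟙_ C ⟶ W2 ⊗ Wd)
    (zig1 : (λ_ W2).inv ≫ (i ⊗ₘ 𝟙 W2) ≫ (α_ W2 Wd W2).hom ≫ (𝟙 W2 ⊗ₘ e) ≫ (ρ_ W2).hom = 𝟙 W2)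
    (zig2 : (ρ_ Wd).inv ≫ (𝟙 Wd ⊗ₘ i) ≫ (α_ Wd W2 Wd).inv ≫ (e ⊗ₘ 𝟙 Wd) ≫ (λ_ Wd).hom = 𝟙 Wd)
    (hWd : ∀ {X Y : C} (g : X ⟶ Y), Epi g → Epi (g ⊗ₘ 𝟙 Wd)) :
    ∀ (W1 : C) (f : W1 ⟶ W2), Epi f → ∃ σ : W2 ⟶ W1, σ ≫ f = 𝟙 W2 := by
  intro W1 f hf
  obtain ⟨h, hh⟩ := hproj (f ⊗ₘ 𝟙 Wd) (hWd f hf) i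
  refine ⟨(λ_ W2).inv ≫ (h ⊗ₘ 𝟙 W2) ≫ (α_ W1 Wd W2).hom ≫ (𝟙 W1 ⊗ₘ e) ≫ (ρ_ W1).hom, ?_⟩
  have : (h ⊗ₘ 𝟙 W2) ≫ (α_ W1 Wd W2).hom ≫ (𝟙 W1 ⊗ₘ e) ≫ (ρ_ W1).hom ≫ f
      = (i ⊗ₘ 𝟙 W2) ≫ (α_ W2 Wd W2).hom ≫ (𝟙 W2 ⊗ₘ e) ≫ (ρ_ W2).hom := by
    rw [← hh]
    simp [tensorHom_comp_tensorHom_assoc]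
    rw [associator_naturality_left_assoc, ← whisker_exchange_assoc]
    simp
  simp only [Category.assoc, this, reassoc_of% zig1]
  exact zig1
end

section
/- Let C be a monoidal category and (A, μ, ι) an algebra in C such that there is a morphism ε : A → 𝟙 with ε ∘ ι = id_𝟙 and the functor A ⊗ − : C → C preserves epimorphisms. If every epimorphism in the category Mod_A of left A-modules splits, then every epimorphism in C splits. -/
open CategoryTheory MonoidalCategory

/-- The free module `A ⊗ W` is unital. -/
private lemma free_unit' {C : Type*} [Category C] [MonoidalCategory C]
    {A : C} (μ : A ⊗ A ⟶ A) (ι : 𝟙_ C ⟶ A)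
    (unit_left : (ι ⊗ₘ 𝟙 A) ≫ μ = (λ_ A).hom) (W : C) :
    (ι ⊗ₘ 𝟙 (A ⊗ W)) ≫ ((α_ A A W).inv ≫ (μ ⊗ₘ 𝟙 W)) = (λ_ (A ⊗ W)).hom := by
  rw [← id_tensorHom_id, associator_inv_naturality_assoc, ← comp_tensor_id, unit_left]
  monoidal_coherence

/-- The free module `A ⊗ W` is associative. -/
private lemma free_assoc' {C : Type*} [Category C] [MonoidalCategory C]
    {A : C} (μ : A ⊗ A ⟶ A)
    (assoc : (𝟙 A ⊗ₘ μ) ≫ μ = (α_ A A A).inv ≫ (μ ⊗ₘ 𝟙 A) ≫ μ) (W : C) :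
    (𝟙 A ⊗ₘ ((α_ A A W).inv ≫ (μ ⊗ₘ 𝟙 W))) ≫ ((α_ A A W).inv ≫ (μ ⊗ₘ 𝟙 W)) =
      (α_ A A (A ⊗ W)).inv ≫ (μ ⊗ₘ 𝟙 (A ⊗ W)) ≫ ((α_ A A W).inv ≫ (μ ⊗ₘ 𝟙 W)) := by
  calc (𝟙 A ⊗ₘ ((α_ A A W).inv ≫ (μ ⊗ₘ 𝟙 W))) ≫ ((α_ A A W).inv ≫ (μ ⊗ₘ 𝟙 W))
      = (𝟙 A ⊗ₘ (α_ A A W).inv) ≫ (𝟙 A ⊗ₘ (μ ⊗ₘ 𝟙 W)) ≫ (α_ A A W).inv ≫ (μ ⊗ₘ 𝟙 W) := by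
        simp [id_tensor_comp]
    _ = (𝟙 A ⊗ₘ (α_ A A W).inv) ≫ (α_ A (A ⊗ A) W).inv ≫ (((𝟙 A ⊗ₘ μ) ≫ μ) ⊗ₘ 𝟙 W) := by
        rw [associator_inv_naturality_assoc, ← comp_tensor_id]
    _ = (𝟙 A ⊗ₘ (α_ A A W).inv) ≫ (α_ A (A ⊗ A) W).inv ≫ ((α_ A A A).inv ⊗ₘ 𝟙 W) ≫
          ((μ ⊗ₘ 𝟙 A) ⊗ₘ 𝟙 W) ≫ (μ ⊗ₘ 𝟙 W) := by
        rw [assoc]; simp [comp_tensor_id]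
    _ = (α_ A A (A ⊗ W)).inv ≫ (α_ (A ⊗ A) A W).inv ≫ ((μ ⊗ₘ 𝟙 A) ⊗ₘ 𝟙 W) ≫ (μ ⊗ₘ 𝟙 W) := by
        simp only [id_tensorHom, tensorHom_id]
        rw [pentagon_inv_assoc]
    _ = (α_ A A (A ⊗ W)).inv ≫ (μ ⊗ₘ 𝟙 (A ⊗ W)) ≫ ((α_ A A W).inv ≫ (μ ⊗ₘ 𝟙 W)) := by
        rw [← id_tensorHom_id, associator_inv_naturality_assoc]

/-- Let `C` be a monoidal category and `(A, μ, ι)` an algebra in `C` with a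
morphism `ε : A ⟶ 𝟙` satisfying `ε ∘ ι = id` and such that `A ⊗ −` preserves epimorphisms.
If every epimorphism in `Mod_A` splits, then every epimorphism in `C` splits. -/
theorem statement10 {C : Type*} [Category C] [MonoidalCategory C]
    (A : C) (μ : A ⊗ A ⟶ A) (ι : 𝟙_ C ⟶ A)
    (unit_left : (ι ⊗ₘ 𝟙 A) ≫ μ = (λ_ A).hom)
    (unit_right : (𝟙 A ⊗ₘ ι) ≫ μ = (ρ_ A).hom)
    (assoc : (𝟙 A ⊗ₘ μ) ≫ μ = (α_ A A A).inv ≫ (μ ⊗ₘ 𝟙 A) ≫ μ)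
    (ε : A ⟶ 𝟙_ C) (hει : ι ≫ ε = 𝟙 (𝟙_ C))
    -- `A ⊗ −` preserves epimorphisms
    (hA : ∀ {X Y : C} (g : X ⟶ Y), Epi g → Epi (𝟙 A ⊗ₘ g))
    -- every epimorphism in Mod_A splits
    (hMod : ∀ (X1 X2 : C) (a1 : A ⊗ X1 ⟶ X1) (a2 : A ⊗ X2 ⟶ X2),
      (ι ⊗ₘ 𝟙 X1) ≫ a1 = (λ_ X1).hom →
      (𝟙 A ⊗ₘ a1) ≫ a1 = (α_ A A X1).inv ≫ (μ ⊗ₘ 𝟙 X1) ≫ a1 →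
      (ι ⊗ₘ 𝟙 X2) ≫ a2 = (λ_ X2).hom →
      (𝟙 A ⊗ₘ a2) ≫ a2 = (α_ A A X2).inv ≫ (μ ⊗ₘ 𝟙 X2) ≫ a2 →
      ∀ (f : X1 ⟶ X2), a1 ≫ f = (𝟙 A ⊗ₘ f) ≫ a2 →
      (∀ (X3 : C) (a3 : A ⊗ X3 ⟶ X3),
        (ι ⊗ₘ 𝟙 X3) ≫ a3 = (λ_ X3).hom →
        (𝟙 A ⊗ₘ a3) ≫ a3 = (α_ A A X3).inv ≫ (μ ⊗ₘ 𝟙 X3) ≫ a3 →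
        ∀ (g h : X2 ⟶ X3), a2 ≫ g = (𝟙 A ⊗ₘ g) ≫ a3 → a2 ≫ h = (𝟙 A ⊗ₘ h) ≫ a3 →
          f ≫ g = f ≫ h → g = h) →
      ∃ s : X2 ⟶ X1, a2 ≫ s = (𝟙 A ⊗ₘ s) ≫ a1 ∧ s ≫ f = 𝟙 X2) :
    ∀ {W1 W2 : C} (f : W1 ⟶ W2), Epi f → ∃ σ : W2 ⟶ W1, σ ≫ f = 𝟙 W2 := by
  intro W1 W2 f hf
  -- `𝟙 A ⊗ₘ f` is a module morphism between the free modules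
  have hcomm : ((α_ A A W1).inv ≫ (μ ⊗ₘ 𝟙 W1)) ≫ (𝟙 A ⊗ₘ f) =
      (𝟙 A ⊗ₘ (𝟙 A ⊗ₘ f)) ≫ ((α_ A A W2).inv ≫ (μ ⊗ₘ 𝟙 W2)) := by
    rw [Category.assoc, associator_inv_naturality_assoc]
    simp [tensorHom_comp_tensorHom, ← whisker_exchange]
  -- `𝟙 A ⊗ₘ f` is "epi" in Mod_A
  have hepi := hA f hf
  obtain ⟨s, hsmod, hs⟩ := hMod (A ⊗ W1) (A ⊗ W2)
    ((α_ A A W1).inv ≫ (μ ⊗ₘ 𝟙 W1)) ((α_ A A W2).inv ≫ (μ ⊗ₘ 𝟙 W2))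
    (free_unit' μ ι unit_left W1) (free_assoc' μ assoc W1)
    (free_unit' μ ι unit_left W2) (free_assoc' μ assoc W2)
    (𝟙 A ⊗ₘ f) hcomm
    (fun X3 a3 _ _ g h _ _ heq => hepi.left_cancellation g h heq)
  refine ⟨(λ_ W2).inv ≫ (ι ⊗ₘ 𝟙 W2) ≫ s ≫ (ε ⊗ₘ 𝟙 W1) ≫ (λ_ W1).hom, ?_⟩
  have h1 : (ε ⊗ₘ 𝟙 W1) ≫ (λ_ W1).hom ≫ f = (𝟙 A ⊗ₘ f) ≫ (ε ⊗ₘ 𝟙 W2) ≫ (λ_ W2).hom := by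
    rw [← leftUnitor_naturality]
    simp only [← id_tensorHom]
    rw [tensorHom_comp_tensorHom_assoc, tensorHom_comp_tensorHom_assoc, Category.comp_id, Category.id_comp,
      Category.comp_id, Category.id_comp]
  rw [Category.assoc, Category.assoc, Category.assoc, Category.assoc, h1,
    ← Category.assoc s, hs, Category.id_comp, tensorHom_comp_tensorHom_assoc, hει,
    Category.comp_id, id_tensorHom_id, Category.id_comp, Iso.inv_hom_id]
end

section
/- Let C be a monoidal category in which every object has a left dual and a right dual (C is rigid) and whose unit object 𝟙 is projective with respect to epimorphisms. Then every epimorphism in C splits; that is, C is semisimple. -/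
open CategoryTheory MonoidalCategory

/-- In a rigid monoidal category whose unit object is projective with respect to
epimorphisms, every epimorphism splits; that is, the category is semisimple. -/
theorem statement11 {C : Type*} [Category C] [MonoidalCategory C] [RigidCategory C]
    (hproj : ∀ {W1 W2 : C} (f : W1 ⟶ W2), Epi f → ∀ (g : 𝟙_ C ⟶ W2),
      ∃ h : 𝟙_ C ⟶ W1, h ≫ f = g) :
    ∀ {W1 W2 : C} (f : W1 ⟶ W2), Epi f → ∃ σ : W2 ⟶ W1, σ ≫ f = 𝟙 W2 := by
  intro W1 W2 f hf
  -- `tensorRight W2ᘁ` is a left adjoint, hence preserves epimorphisms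
  have hla : (tensorRight (W2ᘁ : C)).IsLeftAdjoint :=
    (tensorRightAdjunction (W2ᘁ : C) ((W2ᘁ : C)ᘁ)).isLeftAdjoint
  have hepi : Epi (f ▷ (W2ᘁ : C)) := by
    have := (tensorRight (W2ᘁ : C)).map_epi f
    simpa using this
  obtain ⟨h, hh⟩ := hproj (f ▷ (W2ᘁ : C)) hepi (η_ W2 (W2ᘁ))
  refine ⟨(λ_ W2).inv ≫ h ▷ W2 ≫ (α_ _ _ _).hom ≫ W1 ◁ ε_ W2 (W2ᘁ) ≫ (ρ_ W1).hom, ?_⟩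
  rw [Category.assoc, Category.assoc, Category.assoc, Category.assoc]
  calc (λ_ W2).inv ≫ h ▷ W2 ≫ (α_ _ _ _).hom ≫ W1 ◁ ε_ W2 (W2ᘁ) ≫ (ρ_ W1).hom ≫ f
      = (λ_ W2).inv ≫ h ▷ W2 ≫ (α_ _ _ _).hom ≫ W1 ◁ ε_ W2 (W2ᘁ) ≫ f ▷ 𝟙_ C ≫ (ρ_ W2).hom := by
        rw [← rightUnitor_naturality]
    _ = (λ_ W2).inv ≫ h ▷ W2 ≫ (α_ _ _ _).hom ≫ f ▷ (W2ᘁ ⊗ W2) ≫ W2 ◁ ε_ W2 (W2ᘁ) ≫ (ρ_ W2).hom := by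
        rw [whisker_exchange_assoc]
    _ = (λ_ W2).inv ≫ (h ≫ f ▷ (W2ᘁ : C)) ▷ W2 ≫ (α_ _ _ _).hom ≫ W2 ◁ ε_ W2 (W2ᘁ) ≫ (ρ_ W2).hom := by
        simp [associator_naturality_middle]
    _ = (λ_ W2).inv ≫ η_ W2 (W2ᘁ) ▷ W2 ≫ (α_ _ _ _).hom ≫ W2 ◁ ε_ W2 (W2ᘁ) ≫ (ρ_ W2).hom := by
        rw [hh]
    _ = 𝟙 W2 := by
        rw [ExactPairing.evaluation_coevaluation_assoc]; simp
end
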